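/- Let σ_1, σ_2 : ℂ → ℂ be 1-Lipschitz functions with |σ_j(z)| ≤ |z| for all z. Let g_1, g_2 ∈ L¹(ℝ^d) with ‖g_j‖_1 ≤ 1, and let f_1, f_2, h_1, h_2 ∈ L²(ℝ^d) ∩ L^∞(ℝ^d) with ‖f_j‖_∞ ≤ 1 and ‖h_j‖_∞ ≤ 1. Define F = σ_1(f_1 ∗ g_1) · σ_2(f_2 ∗ g_2) and H = σ_1(h_1 ∗ g_1) · σ_2(h_2 ∗ g_2). Then ‖F − H‖_2² ≤ 2‖(f_1 − h_1) ∗ g_1‖_2² + 2‖(f_2 − h_2) ∗ g_2‖_2². -/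

import Mathlib

open MeasureTheory Real ENNReal
open scoped FourierTransform Convolution

noncomputable section

/-- Convolution of two complex-valued functions on `ℝ^d` w.r.t. Lebesgue measure. -/
def conv {d : ℕ} (f g : EuclideanSpace ℝ (Fin d) → ℂ) :
    EuclideanSpace ℝ (Fin d) → ℂ :=
  MeasureTheory.convolution f g (ContinuousLinearMap.mul ℂ ℂ) volume

section Aux

variable {d : ℕ}

lemma aux_ae_bound {f : EuclideanSpace ℝ (Fin d) → ℂ} (hfb : eLpNorm f ⊤ volume ≤ 1) :
    ∀ᵐ t ∂(volume : Measure (EuclideanSpace ℝ (Fin d))), ‖f t‖ ≤ 1 := by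
  filter_upwards [ae_le_eLpNormEssSup (f := f) (μ := volume)] with t ht
  have h1 : (‖f t‖₊ : ℝ≥0∞) ≤ 1 := ht.trans (by rwa [← eLpNorm_exponent_top])
  have h2 : ‖f t‖₊ ≤ 1 := by exact_mod_cast h1
  exact_mod_cast h2

lemma aux_convExistsAt {f g : EuclideanSpace ℝ (Fin d) → ℂ}
    (hf : AEStronglyMeasurable f volume) (hfb : eLpNorm f ⊤ volume ≤ 1)
    (hg : Integrable g) (x : EuclideanSpace ℝ (Fin d)) :
    Integrable (fun t => f t * g (x - t)) volume := by
  have hgm : Integrable (fun t => g (x - t)) volume := hg.comp_sub_left x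
  have hmeas : AEStronglyMeasurable (fun t => f t * g (x - t)) volume :=
    hf.mul hgm.aestronglyMeasurable
  refine hgm.norm.mono' hmeas ?_
  filter_upwards [aux_ae_bound hfb] with t ht
  calc ‖f t * g (x - t)‖ = ‖f t‖ * ‖g (x - t)‖ := norm_mul _ _
    _ ≤ 1 * ‖g (x - t)‖ := mul_le_mul_of_nonneg_right ht (norm_nonneg _)
    _ = ‖g (x - t)‖ := one_mul _

lemma aux_conv_apply {f g : EuclideanSpace ℝ (Fin d) → ℂ} (x : EuclideanSpace ℝ (Fin d)) :
    conv f g x = ∫ t, f t * g (x - t) := by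
  simp [conv, MeasureTheory.convolution]

lemma aux_conv_bound {f g : EuclideanSpace ℝ (Fin d) → ℂ}
    (hf : AEStronglyMeasurable f volume) (hfb : eLpNorm f ⊤ volume ≤ 1)
    (hg : Integrable g) (hg1 : eLpNorm g 1 volume ≤ 1) (x : EuclideanSpace ℝ (Fin d)) :
    ‖conv f g x‖ ≤ 1 := by
  have hgm : Integrable (fun t => g (x - t)) volume := hg.comp_sub_left x
  rw [aux_conv_apply]
  calc ‖∫ t, f t * g (x - t)‖ ≤ ∫ t, ‖f t * g (x - t)‖ := norm_integral_le_integral_norm _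
    _ ≤ ∫ t, ‖g (x - t)‖ := by
        refine integral_mono_ae (aux_convExistsAt hf hfb hg x).norm hgm.norm ?_
        filter_upwards [aux_ae_bound hfb] with t ht
        calc ‖f t * g (x - t)‖ = ‖f t‖ * ‖g (x - t)‖ := norm_mul _ _
          _ ≤ 1 * ‖g (x - t)‖ := mul_le_mul_of_nonneg_right ht (norm_nonneg _)
          _ = ‖g (x - t)‖ := one_mul _
    _ = ∫ t, ‖g t‖ := integral_sub_left_eq_self (‖g ·‖) volume x
    _ = (eLpNorm g 1 volume).toReal := by
        rw [integral_norm_eq_lintegral_enorm hg.aestronglyMeasurable,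
          eLpNorm_one_eq_lintegral_enorm]
    _ ≤ 1 := by
        have := ENNReal.toReal_mono one_ne_top hg1
        simpa using this

lemma aux_conv_sub {f h g : EuclideanSpace ℝ (Fin d) → ℂ}
    (hf : AEStronglyMeasurable f volume) (hfb : eLpNorm f ⊤ volume ≤ 1)
    (hh : AEStronglyMeasurable h volume) (hhb : eLpNorm h ⊤ volume ≤ 1)
    (hg : Integrable g) (x : EuclideanSpace ℝ (Fin d)) :
    conv (f - h) g x = conv f g x - conv h g x := by
  rw [aux_conv_apply, aux_conv_apply, aux_conv_apply]
  simp only [Pi.sub_apply, sub_mul]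
  exact integral_sub (aux_convExistsAt hf hfb hg x) (aux_convExistsAt hh hhb hg x)

lemma aux_conv_aesm {f g : EuclideanSpace ℝ (Fin d) → ℂ}
    (hf : AEStronglyMeasurable f volume) (hg : AEStronglyMeasurable g volume) :
    AEStronglyMeasurable (conv f g) volume := by
  have h := hf.convolution_integrand (ContinuousLinearMap.mul ℂ ℂ) hg
  exact h.integral_prod_right'

lemma aux_two_mul_le (a b : ℝ≥0∞) : 2 * a * b ≤ a ^ 2 + b ^ 2 := by
  rcases le_total a b with h | h
  · obtain ⟨c, rfl⟩ := exists_add_of_le h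
    calc 2 * a * (a + c) = a ^ 2 + (a ^ 2 + 2 * a * c) := by ring
      _ ≤ a ^ 2 + (a ^ 2 + 2 * a * c + c ^ 2) := add_le_add_right le_self_add _
      _ = a ^ 2 + (a + c) ^ 2 := by ring
  · obtain ⟨c, rfl⟩ := exists_add_of_le h
    calc 2 * (b + c) * b = (b ^ 2 + 2 * b * c) + b ^ 2 := by ring
      _ ≤ (b ^ 2 + 2 * b * c + c ^ 2) + b ^ 2 := add_le_add_left le_self_add _
      _ = (b + c) ^ 2 + b ^ 2 := by ring

lemma aux_sq_add_le (a b : ℝ≥0∞) : (a + b) ^ 2 ≤ 2 * a ^ 2 + 2 * b ^ 2 := by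
  calc (a + b) ^ 2 = 2 * a * b + (a ^ 2 + b ^ 2) := by ring
    _ ≤ (a ^ 2 + b ^ 2) + (a ^ 2 + b ^ 2) := add_le_add_left (aux_two_mul_le a b) _
    _ = 2 * a ^ 2 + 2 * b ^ 2 := by ring

end Aux

/-- Multiplication-aggregation Lipschitz estimate (Lemma 3.4). -/
theorem stmt_3 (d : ℕ) (σ₁ σ₂ : ℂ → ℂ)
    (hσ₁ : LipschitzWith 1 σ₁) (hσ₂ : LipschitzWith 1 σ₂)
    (hσ₁' : ∀ z, ‖σ₁ z‖ ≤ ‖z‖) (hσ₂' : ∀ z, ‖σ₂ z‖ ≤ ‖z‖)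
    (g₁ g₂ f₁ f₂ h₁ h₂ : EuclideanSpace ℝ (Fin d) → ℂ)
    (hg₁ : Integrable g₁) (hg₂ : Integrable g₂)
    (hg₁1 : eLpNorm g₁ 1 volume ≤ 1) (hg₂1 : eLpNorm g₂ 1 volume ≤ 1)
    (hf₁ : MemLp f₁ 2 volume) (hf₂ : MemLp f₂ 2 volume)
    (hh₁ : MemLp h₁ 2 volume) (hh₂ : MemLp h₂ 2 volume)
    (hf₁i : eLpNorm f₁ ⊤ volume ≤ 1) (hf₂i : eLpNorm f₂ ⊤ volume ≤ 1)
    (hh₁i : eLpNorm h₁ ⊤ volume ≤ 1) (hh₂i : eLpNorm h₂ ⊤ volume ≤ 1) :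
    eLpNorm (fun x => σ₁ (conv f₁ g₁ x) * σ₂ (conv f₂ g₂ x)
        - σ₁ (conv h₁ g₁ x) * σ₂ (conv h₂ g₂ x)) 2 volume ^ 2 ≤
      2 * eLpNorm (conv (f₁ - h₁) g₁) 2 volume ^ 2
        + 2 * eLpNorm (conv (f₂ - h₂) g₂) 2 volume ^ 2 := by
  have mf₁ := hf₁.aestronglyMeasurable
  have mf₂ := hf₂.aestronglyMeasurable
  have mh₁ := hh₁.aestronglyMeasurable
  have mh₂ := hh₂.aestronglyMeasurable
  set u₁ := conv (f₁ - h₁) g₁ with hu₁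
  set u₂ := conv (f₂ - h₂) g₂ with hu₂
  -- pointwise bound
  have key : ∀ x, ‖σ₁ (conv f₁ g₁ x) * σ₂ (conv f₂ g₂ x)
      - σ₁ (conv h₁ g₁ x) * σ₂ (conv h₂ g₂ x)‖ ≤ ‖u₁ x‖ + ‖u₂ x‖ := by
    intro x
    set a₁ := conv f₁ g₁ x
    set a₂ := conv f₂ g₂ x
    set c₁ := conv h₁ g₁ x
    set c₂ := conv h₂ g₂ x
    have hb₂ : ‖σ₂ a₂‖ ≤ 1 := (hσ₂' a₂).trans (aux_conv_bound mf₂ hf₂i hg₂ hg₂1 x)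
    have hc₁ : ‖σ₁ c₁‖ ≤ 1 := (hσ₁' c₁).trans (aux_conv_bound mh₁ hh₁i hg₁ hg₁1 x)
    have lip₁ : ‖σ₁ a₁ - σ₁ c₁‖ ≤ ‖a₁ - c₁‖ := by
      have := hσ₁.dist_le_mul a₁ c₁
      simpa [dist_eq_norm] using this
    have lip₂ : ‖σ₂ a₂ - σ₂ c₂‖ ≤ ‖a₂ - c₂‖ := by
      have := hσ₂.dist_le_mul a₂ c₂
      simpa [dist_eq_norm] using this
    have e₁ : u₁ x = a₁ - c₁ := aux_conv_sub mf₁ hf₁i mh₁ hh₁i hg₁ x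
    have e₂ : u₂ x = a₂ - c₂ := aux_conv_sub mf₂ hf₂i mh₂ hh₂i hg₂ x
    calc ‖σ₁ a₁ * σ₂ a₂ - σ₁ c₁ * σ₂ c₂‖
        = ‖(σ₁ a₁ - σ₁ c₁) * σ₂ a₂ + σ₁ c₁ * (σ₂ a₂ - σ₂ c₂)‖ := by ring_nf
      _ ≤ ‖(σ₁ a₁ - σ₁ c₁) * σ₂ a₂‖ + ‖σ₁ c₁ * (σ₂ a₂ - σ₂ c₂)‖ := norm_add_le _ _
      _ = ‖σ₁ a₁ - σ₁ c₁‖ * ‖σ₂ a₂‖ + ‖σ₁ c₁‖ * ‖σ₂ a₂ - σ₂ c₂‖ := by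
          rw [norm_mul, norm_mul]
      _ ≤ ‖a₁ - c₁‖ * 1 + 1 * ‖a₂ - c₂‖ :=
          add_le_add (mul_le_mul lip₁ hb₂ (norm_nonneg _) (norm_nonneg _))
            (mul_le_mul hc₁ lip₂ (norm_nonneg _) zero_le_one)
      _ = ‖u₁ x‖ + ‖u₂ x‖ := by rw [e₁, e₂]; ring
  have aesm₁ : AEStronglyMeasurable u₁ volume :=
    aux_conv_aesm (mf₁.sub mh₁) hg₁.aestronglyMeasurable
  have aesm₂ : AEStronglyMeasurable u₂ volume :=
    aux_conv_aesm (mf₂.sub mh₂) hg₂.aestronglyMeasurable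
  have step1 : eLpNorm (fun x => σ₁ (conv f₁ g₁ x) * σ₂ (conv f₂ g₂ x)
      - σ₁ (conv h₁ g₁ x) * σ₂ (conv h₂ g₂ x)) 2 volume
      ≤ eLpNorm u₁ 2 volume + eLpNorm u₂ 2 volume := by
    calc eLpNorm (fun x => σ₁ (conv f₁ g₁ x) * σ₂ (conv f₂ g₂ x)
        - σ₁ (conv h₁ g₁ x) * σ₂ (conv h₂ g₂ x)) 2 volume
        ≤ eLpNorm (fun x => ‖u₁ x‖ + ‖u₂ x‖) 2 volume := eLpNorm_mono_real key
      _ ≤ eLpNorm (fun x => ‖u₁ x‖) 2 volume + eLpNorm (fun x => ‖u₂ x‖) 2 volume :=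
          eLpNorm_add_le aesm₁.norm aesm₂.norm one_le_two
      _ = eLpNorm u₁ 2 volume + eLpNorm u₂ 2 volume := by rw [eLpNorm_norm, eLpNorm_norm]
  calc eLpNorm (fun x => σ₁ (conv f₁ g₁ x) * σ₂ (conv f₂ g₂ x)
      - σ₁ (conv h₁ g₁ x) * σ₂ (conv h₂ g₂ x)) 2 volume ^ 2
      ≤ (eLpNorm u₁ 2 volume + eLpNorm u₂ 2 volume) ^ 2 := by gcongr
    _ ≤ 2 * eLpNorm u₁ 2 volume ^ 2 + 2 * eLpNorm u₂ 2 volume ^ 2 :=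
        aux_sq_add_le _ _

end
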